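/- Taking q = 1 in the stuttering identity: with a_n = (-1)^{s_2(n)}, the convergent infinite products satisfy ∏_{n=0}^∞ (1 + a_{⌊n/2⌋}/(2n+1)) = √2 · ∏_{n=0}^∞ (1 + a_n/(2n+1)). -/

import Mathlib

open Real Finset Filter

/-- The ±1-valued Thue–Morse sequence: `a n = (-1)^(binary digit sum of n)`. -/
noncomputable def thueMorse (n : ℕ) : ℝ := (-1) ^ (Nat.digits 2 n).sum


lemma tm_zero : thueMorse 0 = 1 := by simp [thueMorse]

lemma tm_pm (n : ℕ) : thueMorse n = 1 ∨ thueMorse n = -1 := by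
  unfold thueMorse
  rcases Nat.even_or_odd (Nat.digits 2 n).sum with h | h
  · exact Or.inl (h.neg_one_pow)
  · exact Or.inr (h.neg_one_pow)

lemma tm_abs (n : ℕ) : |thueMorse n| = 1 := by
  rcases tm_pm n with h | h <;> rw [h] <;> norm_num

lemma tm_two_mul (n : ℕ) : thueMorse (2 * n) = thueMorse n := by
  rcases Nat.eq_zero_or_pos n with rfl | hn
  · norm_num
  · unfold thueMorse
    rw [Nat.digits_def' (by norm_num) (by omega)]
    simp [Nat.mul_div_cancel_left, Nat.mul_mod_right]

lemma tm_two_mul_add_one (n : ℕ) : thueMorse (2 * n + 1) = - thueMorse n := by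
  unfold thueMorse
  rw [Nat.digits_def' (by norm_num) (by omega)]
  have h1 : (2 * n + 1) % 2 = 1 := by omega
  have h2 : (2 * n + 1) / 2 = n := by omega
  rw [h1, h2, List.sum_cons, pow_add]
  ring


lemma tendsto_even_odd {f : ℕ → ℝ} {l : ℝ}
    (he : Tendsto (fun n => f (2 * n)) atTop (nhds l))
    (ho : Tendsto (fun n => f (2 * n + 1)) atTop (nhds l)) :
    Tendsto f atTop (nhds l) := by
  rw [Metric.tendsto_atTop] at *
  intro ε hε
  obtain ⟨N1, h1⟩ := he ε hε
  obtain ⟨N2, h2⟩ := ho ε hε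
  refine ⟨2 * (max N1 N2) + 2, fun n hn => ?_⟩
  rcases Nat.even_or_odd n with ⟨k, hk⟩ | ⟨k, hk⟩
  · have : n = 2 * k := by omega
    rw [this]; exact h1 k (by omega)
  · have : n = 2 * k + 1 := by omega
    rw [this]; exact h2 k (by omega)

lemma sum_range_two_mul (f : ℕ → ℝ) (N : ℕ) :
    ∑ n ∈ range (2 * N), f n = ∑ k ∈ range N, (f (2 * k) + f (2 * k + 1)) := by
  induction N with
  | zero => simp
  | succ N ih =>
    have : 2 * (N + 1) = (2 * N + 1) + 1 := by ring
    rw [this, Finset.sum_range_succ, Finset.sum_range_succ, ih, Finset.sum_range_succ]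
    ring

lemma abs_log_one_add_le {x : ℝ} (hx : |x| ≤ 1 / 2) : |Real.log (1 + x)| ≤ 2 * |x| := by
  have hx1 : -(1/2) ≤ x := by cases abs_le.mp hx; linarith
  have hx2 : x ≤ 1/2 := (abs_le.mp hx).2
  have h1 : (0:ℝ) < 1 + x := by linarith
  have hu : Real.log (1 + x) ≤ x := by
    have := Real.log_le_sub_one_of_pos h1
    linarith
  have hlo : x / (1 + x) ≤ Real.log (1 + x) := by
    have h2 : (0:ℝ) < (1 + x)⁻¹ := by positivity
    have := Real.log_le_sub_one_of_pos h2
    rw [Real.log_inv] at this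
    have heq : (1 + x)⁻¹ - 1 = -(x / (1 + x)) := by field_simp; ring
    linarith [this, heq ▸ this]
  rw [abs_le]
  constructor
  · have : -(2 * |x|) ≤ x / (1 + x) := by
      rcases le_or_gt 0 x with h | h
      · have : 0 ≤ x / (1 + x) := by positivity
        have : 0 ≤ |x| := abs_nonneg x
        linarith
      · rw [abs_of_neg h, le_div_iff₀ h1]
        nlinarith
    linarith
  · have : x ≤ |x| := le_abs_self x
    have : (0:ℝ) ≤ |x| := abs_nonneg x
    linarith [le_abs_self x]

lemma summable_of_sq_bound {g : ℕ → ℝ} (C : ℝ) (h : ∀ k, |g k| ≤ C / ((k : ℝ) + 1) ^ 2) :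
    Summable g := by
  have hs : Summable (fun n : ℕ => (1 : ℝ) / ((n : ℝ)) ^ 2) :=
    Real.summable_one_div_nat_pow.mpr (by norm_num)
  have hs1 : Summable (fun n : ℕ => (1 : ℝ) / ((n : ℝ) + 1) ^ 2) := by
    have := (summable_nat_add_iff 1).mpr hs
    simpa using this
  have hs2 : Summable (fun n : ℕ => C * ((1 : ℝ) / ((n : ℝ) + 1) ^ 2)) := hs1.mul_left C
  refine Summable.of_norm_bounded hs2 (fun k => ?_)
  have := h k
  rw [Real.norm_eq_abs]
  calc |g k| ≤ C / ((k:ℝ)+1)^2 := this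
    _ = C * (1 / ((k:ℝ)+1)^2) := by ring

noncomputable def la (n : ℕ) : ℝ := Real.log (1 + thueMorse n / (2 * (n:ℝ) + 1))
noncomputable def ma (n : ℕ) : ℝ := Real.log (1 + thueMorse (n / 2) / (2 * (n:ℝ) + 1))

lemma factor_pos {m n : ℕ} (h : m ≤ n) : 0 < 1 + thueMorse m / (2 * (n:ℝ) + 1) := by
  rcases Nat.eq_zero_or_pos n with rfl | hn
  · have : m = 0 := by omega
    subst this
    rw [tm_zero]
    norm_num
  · have hn1 : (1:ℝ) ≤ (n:ℝ) := by exact_mod_cast hn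
    have hd0 : (0:ℝ) < 2*(n:ℝ)+1 := by linarith
    rcases tm_pm m with hm | hm
    · rw [hm]; positivity
    · rw [hm, neg_div]
      have : 1/(2*(n:ℝ)+1) < 1 := by
        rw [div_lt_one hd0]; linarith
      linarith

lemma log_term_tendsto (m : ℕ → ℕ) :
    Tendsto (fun n => Real.log (1 + thueMorse (m n) / (2 * (n:ℝ) + 1))) atTop (nhds 0) := by
  have hg : Tendsto (fun n : ℕ => 2 / (2 * (n:ℝ) + 1)) atTop (nhds 0) := by
    apply Tendsto.div_atTop (tendsto_const_nhds)
    apply tendsto_atTop_add_const_right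
    exact (tendsto_natCast_atTop_atTop (R := ℝ)).const_mul_atTop (by norm_num)
  apply squeeze_zero_norm' _ hg
  filter_upwards [eventually_ge_atTop 1] with n hn
  have hn1 : (1:ℝ) ≤ (n:ℝ) := by exact_mod_cast hn
  have hd0 : (0:ℝ) < 2*(n:ℝ)+1 := by linarith
  have hx : |thueMorse (m n) / (2*(n:ℝ)+1)| ≤ 1/2 := by
    rw [abs_div, tm_abs, abs_of_pos hd0, div_le_div_iff₀ hd0 (by norm_num)]
    linarith
  calc ‖Real.log (1 + thueMorse (m n) / (2*(n:ℝ)+1))‖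
      ≤ 2 * |thueMorse (m n) / (2*(n:ℝ)+1)| := abs_log_one_add_le hx
    _ = 2 * (1 / (2*(n:ℝ)+1)) := by rw [abs_div, tm_abs, abs_of_pos hd0]
    _ = 2 / (2*(n:ℝ)+1) := by ring

lemma la_tendsto_zero : Tendsto la atTop (nhds 0) := by
  have := log_term_tendsto id
  exact this

lemma ma_tendsto_zero : Tendsto ma atTop (nhds 0) := by
  have := log_term_tendsto (fun n => n / 2)
  exact this

lemma tm_sq (k : ℕ) : thueMorse k ^ 2 = 1 := by
  rcases tm_pm k with h | h <;> rw [h] <;> norm_num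

lemma la_even (k : ℕ) : la (2*k) = Real.log (1 + thueMorse k/(4*(k:ℝ)+1)) := by
  unfold la
  rw [tm_two_mul]
  norm_num
  ring_nf

lemma la_odd (k : ℕ) : la (2*k+1) = Real.log (1 - thueMorse k/(4*(k:ℝ)+3)) := by
  unfold la
  rw [tm_two_mul_add_one]
  push_cast
  ring_nf

lemma one_add_pos {x : ℝ} (h : |x| < 1) : 0 < 1 + x := by
  rcases abs_lt.mp h with ⟨h1, h2⟩; linarith

lemma abs_tm_div {k : ℕ} {d : ℝ} (hd : 1 < d) : |thueMorse k / d| < 1 := by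
  rw [abs_div, tm_abs, abs_of_pos (by linarith), div_lt_one (by linarith)]
  exact hd

lemma pos_even (k : ℕ) : 0 < 1 + thueMorse k/(4*(k:ℝ)+1) := by
  rcases Nat.eq_zero_or_pos k with rfl | hk
  · rw [tm_zero]; norm_num
  · have hk1 : (1:ℝ) ≤ (k:ℝ) := by exact_mod_cast hk
    exact one_add_pos (abs_tm_div (by linarith))

lemma pos_odd_neg (k : ℕ) : 0 < 1 - thueMorse k/(4*(k:ℝ)+3) := by
  have h : 1 - thueMorse k/(4*(k:ℝ)+3) = 1 + (-thueMorse k)/(4*(k:ℝ)+3) := by ring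
  rw [h]
  have : |(-thueMorse k)/(4*(k:ℝ)+3)| < 1 := by
    rw [abs_div, abs_neg, tm_abs]
    rw [abs_of_pos (by positivity), div_lt_one (by positivity)]
    have : (0:ℝ) ≤ (k:ℝ) := Nat.cast_nonneg k
    linarith
  exact one_add_pos this

lemma pos_odd_pos (k : ℕ) : 0 < 1 + thueMorse k/(4*(k:ℝ)+3) := by
  apply one_add_pos
  rw [abs_div, tm_abs, abs_of_pos (by positivity), div_lt_one (by positivity)]
  have : (0:ℝ) ≤ (k:ℝ) := Nat.cast_nonneg k
  linarith

lemma la_pair (k : ℕ) :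
    la (2*k) + la (2*k+1) =
      Real.log (1 + (2*thueMorse k - 1)/((4*(k:ℝ)+1)*(4*(k:ℝ)+3))) := by
  rw [la_even, la_odd, ← Real.log_mul (ne_of_gt (pos_even k)) (ne_of_gt (pos_odd_neg k))]
  congr 1
  have hsq := tm_sq k
  have h1 : (4*(k:ℝ)+1) ≠ 0 := by positivity
  have h3 : (4*(k:ℝ)+3) ≠ 0 := by positivity
  field_simp
  ring_nf
  nlinarith [hsq]

lemma la_pair_summable : Summable (fun k => la (2*k) + la (2*k+1)) := by
  apply summable_of_sq_bound 6
  intro k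
  rw [la_pair]
  set x := (2*thueMorse k - 1)/((4*(k:ℝ)+1)*(4*(k:ℝ)+3)) with hxdef
  have hd : (0:ℝ) < (4*(k:ℝ)+1)*(4*(k:ℝ)+3) := by positivity
  have hb : |x| ≤ 3/((4*(k:ℝ)+1)*(4*(k:ℝ)+3)) := by
    rw [hxdef, abs_div, abs_of_pos hd]
    have : |2*thueMorse k - 1| ≤ 3 := by
      rcases tm_pm k with h|h <;> rw [h] <;> norm_num
    gcongr
  have hhalf : |x| ≤ 1/2 := by
    rcases Nat.eq_zero_or_pos k with rfl | hk
    · rw [hxdef, tm_zero]; rw [abs_le]; norm_num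
    · have hk1 : (1:ℝ) ≤ (k:ℝ) := by exact_mod_cast hk
      calc |x| ≤ 3/((4*(k:ℝ)+1)*(4*(k:ℝ)+3)) := hb
        _ ≤ 1/2 := by
            rw [div_le_div_iff₀ hd (by norm_num)]
            nlinarith
  calc |Real.log (1+x)| ≤ 2*|x| := abs_log_one_add_le hhalf
    _ ≤ 2*(3/((4*(k:ℝ)+1)*(4*(k:ℝ)+3))) := by linarith
    _ = 6/((4*(k:ℝ)+1)*(4*(k:ℝ)+3)) := by ring
    _ ≤ 6/((k:ℝ)+1)^2 := by
        apply div_le_div_of_nonneg_left (by norm_num) (by positivity)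
        nlinarith [Nat.cast_nonneg (α := ℝ) k]

lemma la_sum_tendsto : Tendsto (fun N => ∑ n ∈ range N, la n) atTop
    (nhds (∑' k, (la (2*k) + la (2*k+1)))) := by
  set l1 := ∑' k, (la (2*k) + la (2*k+1)) with hl1
  have he : Tendsto (fun N => ∑ n ∈ range (2*N), la n) atTop (nhds l1) := by
    have := la_pair_summable.hasSum.tendsto_sum_nat
    convert this using 2 with N
    exact sum_range_two_mul la N
  apply tendsto_even_odd he
  have ho : Tendsto (fun N => ∑ n ∈ range (2*N), la n + la (2*N)) atTop (nhds (l1 + 0)) :=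
    he.add (la_tendsto_zero.comp (tendsto_atTop_atTop_of_monotone
      (fun a b h => by omega) (fun b => ⟨b, by omega⟩)))
  simp only [add_zero] at ho
  convert ho using 2 with N
  exact Finset.sum_range_succ la (2*N)

noncomputable def wt (n : ℕ) : ℝ := thueMorse n * (Real.log ((n:ℝ) + 1) - Real.log (n:ℝ))
noncomputable def sTerm (k : ℕ) : ℝ :=
  thueMorse k * (Real.log (2*(k:ℝ)+2) - Real.log (2*(k:ℝ)+1))
noncomputable def qTerm (k : ℕ) : ℝ :=
  thueMorse k * (Real.log (2*(k:ℝ)+1) - Real.log (2*(k:ℝ)))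

lemma wt_pair (k : ℕ) : wt (2*k) + wt (2*k+1) = qTerm k - sTerm k := by
  unfold wt qTerm sTerm
  rw [tm_two_mul, tm_two_mul_add_one]
  push_cast
  ring_nf

lemma vt_bound (k : ℕ) : |qTerm k - sTerm k| ≤ 2 / ((k:ℝ)+1)^2 := by
  rcases Nat.eq_zero_or_pos k with rfl | hk
  · unfold qTerm sTerm
    rw [tm_zero]
    norm_num
    rw [abs_le]
    have h1 : Real.log 2 ≤ 1 := by
      have := Real.log_le_sub_one_of_pos (by norm_num : (0:ℝ) < 2)
      linarith
    have h2 : 0 ≤ Real.log 2 := Real.log_nonneg (by norm_num)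
    constructor <;> linarith
  · have hk1 : (1:ℝ) ≤ (k:ℝ) := by exact_mod_cast hk
    have key : qTerm k - sTerm k =
        thueMorse k * Real.log (1 + 1/(4*(k:ℝ)^2+4*(k:ℝ))) := by
      unfold qTerm sTerm
      have heq : (1:ℝ) + 1/(4*(k:ℝ)^2+4*(k:ℝ)) =
          (2*(k:ℝ)+1)^2 / ((2*(k:ℝ)) * (2*(k:ℝ)+2)) := by
        field_simp
        ring
      have key2 : Real.log (1 + 1/(4*(k:ℝ)^2+4*(k:ℝ))) =
          2*Real.log (2*(k:ℝ)+1) - Real.log (2*(k:ℝ)) - Real.log (2*(k:ℝ)+2) := by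
        rw [heq, Real.log_div (by positivity) (by positivity),
          Real.log_mul (by positivity) (by positivity), Real.log_pow]
        push_cast
        ring
      rw [key2]
      ring
    rw [key, abs_mul, tm_abs, one_mul]
    have hx : |1/(4*(k:ℝ)^2+4*(k:ℝ))| ≤ 1/2 := by
      rw [abs_of_pos (by positivity), div_le_div_iff₀ (by positivity) (by norm_num)]
      nlinarith
    calc |Real.log (1 + 1/(4*(k:ℝ)^2+4*(k:ℝ)))| ≤ 2*|1/(4*(k:ℝ)^2+4*(k:ℝ))| :=
          abs_log_one_add_le hx
      _ = 2/(4*(k:ℝ)^2+4*(k:ℝ)) := by rw [abs_of_pos (by positivity)]; ring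
      _ ≤ 2/((k:ℝ)+1)^2 := by
          apply div_le_div_of_nonneg_left (by norm_num) (by positivity)
          nlinarith

lemma vt_summable : Summable (fun k => wt (2*k) + wt (2*k+1)) := by
  apply summable_of_sq_bound 2
  intro k
  rw [wt_pair]
  exact vt_bound k

lemma wt_tendsto_zero : Tendsto wt atTop (nhds 0) := by
  have hg : Tendsto (fun n : ℕ => 2 / (n:ℝ)) atTop (nhds 0) := by
    apply Tendsto.div_atTop (tendsto_const_nhds)
    exact tendsto_natCast_atTop_atTop
  apply squeeze_zero_norm' _ hg
  filter_upwards [eventually_ge_atTop 2] with n hn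
  have hn1 : (2:ℝ) ≤ (n:ℝ) := by exact_mod_cast hn
  have heq : Real.log ((n:ℝ)+1) - Real.log (n:ℝ) = Real.log (1 + 1/(n:ℝ)) := by
    have h2 : (1:ℝ) + 1/(n:ℝ) = ((n:ℝ)+1)/(n:ℝ) := by field_simp
    rw [h2, Real.log_div (by positivity) (by positivity)]
  have hx : |1/(n:ℝ)| ≤ 1/2 := by
    rw [abs_of_pos (by positivity), div_le_div_iff₀ (by positivity) (by norm_num)]
    linarith
  calc ‖wt n‖ = |thueMorse n| * |Real.log ((n:ℝ)+1) - Real.log (n:ℝ)| := abs_mul _ _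
    _ = |Real.log (1 + 1/(n:ℝ))| := by rw [tm_abs, one_mul, heq]
    _ ≤ 2*|1/(n:ℝ)| := abs_log_one_add_le hx
    _ ≤ 2/(n:ℝ) := by rw [abs_of_pos (by positivity)]; apply le_of_eq; ring

lemma wt_sum_tendsto : Tendsto (fun N => ∑ n ∈ range N, wt n) atTop
    (nhds (∑' k, (wt (2*k) + wt (2*k+1)))) := by
  set τ := ∑' k, (wt (2*k) + wt (2*k+1)) with hτ
  have he : Tendsto (fun N => ∑ n ∈ range (2*N), wt n) atTop (nhds τ) := by
    have := vt_summable.hasSum.tendsto_sum_nat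
    convert this using 2 with N
    exact sum_range_two_mul wt N
  apply tendsto_even_odd he
  have ho : Tendsto (fun N => ∑ n ∈ range (2*N), wt n + wt (2*N)) atTop (nhds (τ + 0)) :=
    he.add (wt_tendsto_zero.comp (tendsto_atTop_atTop_of_monotone
      (fun a b h => by omega) (fun b => ⟨b, by omega⟩)))
  simp only [add_zero] at ho
  convert ho using 2 with N
  exact Finset.sum_range_succ wt (2*N)

lemma sq_eq_wt (k : ℕ) :
    sTerm k + qTerm k = wt k + (if k = 0 then Real.log 2 else 0) := by
  rcases Nat.eq_zero_or_pos k with rfl | hk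
  · unfold sTerm qTerm wt
    rw [tm_zero]
    norm_num
  · have hk1 : (1:ℝ) ≤ (k:ℝ) := by exact_mod_cast hk
    rw [if_neg (by omega)]
    unfold sTerm qTerm wt
    have h1 : Real.log (2*(k:ℝ)+2) = Real.log 2 + Real.log ((k:ℝ)+1) := by
      have : 2*(k:ℝ)+2 = 2*((k:ℝ)+1) := by ring
      rw [this, Real.log_mul (by norm_num) (by positivity)]
    have h2 : Real.log (2*(k:ℝ)) = Real.log 2 + Real.log (k:ℝ) := by
      rw [Real.log_mul (by norm_num) (by positivity)]
    rw [h1, h2]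
    ring

lemma s_identity (N : ℕ) (hN : 1 ≤ N) :
    2 * ∑ k ∈ range N, sTerm k =
      Real.log 2 + ∑ n ∈ range N, wt n - ∑ n ∈ range (2*N), wt n := by
  have h1 : ∑ n ∈ range (2*N), wt n = ∑ k ∈ range N, (qTerm k - sTerm k) := by
    rw [sum_range_two_mul]
    exact Finset.sum_congr rfl (fun k _ => wt_pair k)
  have h2 : ∑ k ∈ range N, (sTerm k + qTerm k) = ∑ n ∈ range N, wt n + Real.log 2 := by
    rw [Finset.sum_congr rfl (fun k _ => sq_eq_wt k), Finset.sum_add_distrib]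
    congr 1
    rw [Finset.sum_ite_eq' (range N) 0 (fun _ => Real.log 2)]
    rw [if_pos (Finset.mem_range.mpr hN)]
  have h3 : ∑ k ∈ range N, (sTerm k + qTerm k) =
      ∑ k ∈ range N, sTerm k + ∑ k ∈ range N, qTerm k := Finset.sum_add_distrib
  have h4 : ∑ k ∈ range N, (qTerm k - sTerm k) =
      ∑ k ∈ range N, qTerm k - ∑ k ∈ range N, sTerm k := Finset.sum_sub_distrib _ _
  linarith

lemma s_tendsto : Tendsto (fun N => ∑ k ∈ range N, sTerm k) atTop (nhds (Real.log 2 / 2)) := by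
  set τ := ∑' k, (wt (2*k) + wt (2*k+1)) with hτ
  have hT := wt_sum_tendsto
  have hT2 : Tendsto (fun N => ∑ n ∈ range (2*N), wt n) atTop (nhds τ) :=
    hT.comp (tendsto_atTop_atTop_of_monotone (fun a b h => by omega) (fun b => ⟨b, by omega⟩))
  have hmain : Tendsto
      (fun N => (Real.log 2 + ∑ n ∈ range N, wt n - ∑ n ∈ range (2*N), wt n) / 2)
      atTop (nhds ((Real.log 2 + τ - τ) / 2)) :=
    (((tendsto_const_nhds (x := Real.log 2)).add hT).sub hT2).div_const 2
  have : (Real.log 2 + τ - τ) / 2 = Real.log 2 / 2 := by ring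
  rw [this] at hmain
  apply hmain.congr'
  filter_upwards [eventually_ge_atTop 1] with N hN
  have := s_identity N hN
  linarith

lemma ma_even (k : ℕ) : ma (2*k) = la (2*k) := by
  unfold ma la
  rw [Nat.mul_div_cancel_left k (by norm_num), tm_two_mul]

lemma ma_odd_eq (k : ℕ) : ma (2*k+1) = la (2*k+1) + sTerm k := by
  have hdiv : (2*k+1)/2 = k := by omega
  have hma : ma (2*k+1) = Real.log (1 + thueMorse k/(4*(k:ℝ)+3)) := by
    unfold ma
    rw [hdiv]
    push_cast
    ring_nf
  rw [hma, la_odd]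
  have hc : (0:ℝ) < 4*(k:ℝ)+3 := by positivity
  unfold sTerm
  have e1 : (1:ℝ) + 1/(4*(k:ℝ)+3) = (2*(2*(k:ℝ)+2))/(4*(k:ℝ)+3) := by
    field_simp; ring
  have e2 : (1:ℝ) - 1/(4*(k:ℝ)+3) = (2*(2*(k:ℝ)+1))/(4*(k:ℝ)+3) := by
    field_simp; ring
  rcases tm_pm k with h | h
  · rw [h, one_mul, e1, e2,
      Real.log_div (by positivity) (ne_of_gt hc), Real.log_div (by positivity) (ne_of_gt hc),
      Real.log_mul (by norm_num) (by positivity), Real.log_mul (by norm_num) (by positivity)]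
    ring
  · have e1' : (1:ℝ) + (-1)/(4*(k:ℝ)+3) = (2*(2*(k:ℝ)+1))/(4*(k:ℝ)+3) := by
      field_simp; ring
    have e2' : (1:ℝ) - (-1)/(4*(k:ℝ)+3) = (2*(2*(k:ℝ)+2))/(4*(k:ℝ)+3) := by
      field_simp; ring
    rw [h, e1', e2',
      Real.log_div (by positivity) (ne_of_gt hc), Real.log_div (by positivity) (ne_of_gt hc),
      Real.log_mul (by norm_num) (by positivity), Real.log_mul (by norm_num) (by positivity)]
    ring

lemma ma_sum_even (N : ℕ) :
    ∑ n ∈ range (2*N), ma n = ∑ n ∈ range (2*N), la n + ∑ k ∈ range N, sTerm k := by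
  rw [sum_range_two_mul ma, sum_range_two_mul la, ← Finset.sum_add_distrib]
  apply Finset.sum_congr rfl
  intro k _
  rw [ma_even, ma_odd_eq]
  ring

lemma ma_sum_tendsto : Tendsto (fun N => ∑ n ∈ range N, ma n) atTop
    (nhds ((∑' k, (la (2*k) + la (2*k+1))) + Real.log 2 / 2)) := by
  set l1 := ∑' k, (la (2*k) + la (2*k+1)) with hl1
  have hdouble : Tendsto (fun N : ℕ => 2*N) atTop atTop :=
    tendsto_atTop_atTop_of_monotone (fun a b h => by omega) (fun b => ⟨b, by omega⟩)
  have he0 : Tendsto (fun N => ∑ n ∈ range (2*N), la n) atTop (nhds l1) :=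
    la_sum_tendsto.comp hdouble
  have he : Tendsto (fun N => ∑ n ∈ range (2*N), ma n) atTop (nhds (l1 + Real.log 2 / 2)) := by
    have := he0.add s_tendsto
    apply this.congr
    intro N
    exact (ma_sum_even N).symm
  apply tendsto_even_odd he
  have ho : Tendsto (fun N => ∑ n ∈ range (2*N), ma n + ma (2*N)) atTop
      (nhds (l1 + Real.log 2 / 2 + 0)) :=
    he.add (ma_tendsto_zero.comp hdouble)
  simp only [add_zero] at ho
  convert ho using 2 with N
  exact Finset.sum_range_succ ma (2*N)

theorem stuttered_product_q_one :
    ∃ I1 I2 : ℝ, I1 ≠ 0 ∧ I2 ≠ 0 ∧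
      Filter.Tendsto
        (fun N => ∏ n ∈ Finset.range N, (1 + thueMorse n / (2 * n + 1)))
        Filter.atTop (nhds I1) ∧
      Filter.Tendsto
        (fun N => ∏ n ∈ Finset.range N, (1 + thueMorse (n / 2) / (2 * n + 1)))
        Filter.atTop (nhds I2) ∧
      I2 = Real.sqrt 2 * I1 := by
  set l1 := ∑' k, (la (2*k) + la (2*k+1)) with hl1
  refine ⟨Real.exp l1, Real.exp (l1 + Real.log 2 / 2), Real.exp_ne_zero _,
    Real.exp_ne_zero _, ?_, ?_, ?_⟩
  · have h1 : Tendsto (fun N => Real.exp (∑ n ∈ range N, la n)) atTop (nhds (Real.exp l1)) :=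
      (Real.continuous_exp.tendsto l1).comp la_sum_tendsto
    apply h1.congr
    intro N
    rw [Real.exp_sum]
    apply Finset.prod_congr rfl
    intro n _
    exact Real.exp_log (factor_pos (le_refl n))
  · have h1 : Tendsto (fun N => Real.exp (∑ n ∈ range N, ma n)) atTop
        (nhds (Real.exp (l1 + Real.log 2 / 2))) :=
      (Real.continuous_exp.tendsto _).comp ma_sum_tendsto
    apply h1.congr
    intro N
    rw [Real.exp_sum]
    apply Finset.prod_congr rfl
    intro n _
    exact Real.exp_log (factor_pos (Nat.div_le_self n 2))
  · rw [Real.exp_add]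
    have : Real.exp (Real.log 2 / 2) = Real.sqrt 2 := by
      rw [← Real.log_sqrt (by norm_num : (0:ℝ) ≤ 2),
        Real.exp_log (Real.sqrt_pos.mpr (by norm_num))]
    rw [this]
    ring
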